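/- arXiv:2604.25870 — 5 statements merged into one kernel-verified Lean document; each statement's English description precedes it below -/
import Mathlib

section
/- Let q be a prime power, γ ∈ F_{q^2}^*, k ≥ 1, and let F(X) = a_0 + Σ_{i=1}^{k-1} a_i X^i + γ a_k X^k with a_0, a_k ∈ F_q, a_k ≠ 0, and a_1,…,a_{k-1} ∈ F_{q^2}. If F has k distinct roots λ_1,…,λ_k ∈ F_q^*, then γ^{q+1} is a nonzero square in F_q. -/
open Polynomial

/-- If a twisted polynomial a₀ + Σ aᵢXⁱ + γ a_k X^k (a₀,a_k ∈ F_q, a_k ≠ 0) has k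
distinct roots in F_q^*, then γ^{q+1} is a nonzero square in F_q. -/
theorem stmt6 (q : ℕ) (K L : Type*) [Field K] [Field L] [Fintype K] [Fintype L] [Algebra K L]
    (hK : Fintype.card K = q) (hL : Fintype.card L = q ^ 2)
    (γ : L) (hγ : γ ≠ 0) (k : ℕ) (hk : 1 ≤ k)
    (a0 ak : K) (hak : ak ≠ 0) (mid : ℕ → L)
    (lam : Fin k → L) (hinj : Function.Injective lam)
    (hlam : ∀ j, ∃ c : K, c ≠ 0 ∧ lam j = algebraMap K L c)
    (hroot : ∀ j, algebraMap K L a0 + (∑ i ∈ Finset.Ico 1 k, mid i * lam j ^ i)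
      + γ * algebraMap K L ak * lam j ^ k = 0) :
    ∃ s : K, s ≠ 0 ∧ algebraMap K L (s ^ 2) = γ ^ (q + 1) := by
  classical
  set c : L := γ * algebraMap K L ak with hc
  have hcne : c ≠ 0 := mul_ne_zero hγ (by
    simpa using (algebraMap K L).injective.ne hak)
  set P : L[X] := C (algebraMap K L a0) + (∑ i ∈ Finset.Ico 1 k, C (mid i) * X ^ i)
    + C c * X ^ k with hP
  set R : L[X] := C c * ∏ j : Fin k, (X - C (lam j)) with hR
  -- degree facts
  have hprodmonic : (∏ j : Fin k, (X - C (lam j)) : L[X]).Monic :=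
    monic_prod_of_monic _ _ fun j _ => monic_X_sub_C _
  have hproddeg : (∏ j : Fin k, (X - C (lam j)) : L[X]).degree = k := by
    rw [degree_prod]
    simp [degree_X_sub_C]
  have hdiff : ((X : L[X]) ^ k - ∏ j : Fin k, (X - C (lam j))).degree < k := by
    have := degree_sub_lt (p := (X : L[X]) ^ k) (q := ∏ j : Fin k, (X - C (lam j)))
      (by rw [degree_X_pow, hproddeg]) (pow_ne_zero _ X_ne_zero)
      (by rw [leadingCoeff_X_pow, hprodmonic.leadingCoeff])
    rwa [degree_X_pow] at this
  have hQdeg : (P - R).degree < (k : ℕ) := by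
    have hPR : P - R = (C (algebraMap K L a0) + ∑ i ∈ Finset.Ico 1 k, C (mid i) * X ^ i)
        + C c * ((X : L[X]) ^ k - ∏ j : Fin k, (X - C (lam j))) := by
      rw [hP, hR]; ring
    rw [hPR]
    apply lt_of_le_of_lt (degree_add_le _ _)
    apply max_lt
    · apply lt_of_le_of_lt (degree_add_le _ _)
      apply max_lt
      · exact lt_of_le_of_lt degree_C_le (by exact_mod_cast WithBot.coe_lt_coe.2 hk)
      · apply lt_of_le_of_lt (degree_sum_le _ _)
        refine (Finset.sup_lt_iff (by exact_mod_cast WithBot.bot_lt_coe k)).2 ?_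
        intro i hi
        apply lt_of_le_of_lt (degree_mul_le _ _)
        apply lt_of_le_of_lt (add_le_add degree_C_le le_rfl)
        rw [zero_add, degree_X_pow]
        exact_mod_cast WithBot.coe_lt_coe.2 (Finset.mem_Ico.1 hi).2
    · apply lt_of_le_of_lt (degree_mul_le _ _)
      apply lt_of_le_of_lt (add_le_add degree_C_le le_rfl)
      rwa [zero_add]
  -- roots kill P - R
  have heval : ∀ j : Fin k, (P - R).eval (lam j) = 0 := by
    intro j
    have h1 : P.eval (lam j) = 0 := by
      have := hroot j
      simp only [hP, eval_add, eval_mul, eval_C, eval_pow, eval_X, eval_finset_sum]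
      simpa [hc, mul_assoc] using this
    have h2 : R.eval (lam j) = 0 := by
      simp only [hR, eval_mul, eval_prod, eval_sub, eval_X, eval_C]
      rw [Finset.prod_eq_zero (Finset.mem_univ j) (by simp), mul_zero]
    simp [eval_sub, h1, h2]
  have hPQ : P = R := by
    refine sub_eq_zero.1 ?_
    rcases eq_or_ne (P - R) 0 with h | h
    · exact h
    · refine eq_zero_of_natDegree_lt_card_of_eval_eq_zero (P - R) hinj heval ?_
      rw [Fintype.card_fin]
      exact (natDegree_lt_iff_degree_lt h).2 hQdeg
  -- evaluate at 0
  have heval0 : algebraMap K L a0 = c * ∏ j : Fin k, (0 - lam j) := by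
    have h := congrArg (Polynomial.eval 0) hPQ
    simp only [hP, hR, eval_add, eval_mul, eval_C, eval_pow, eval_X, eval_finset_sum,
      eval_prod, eval_sub] at h
    rw [zero_pow (by omega : k ≠ 0), mul_zero, add_zero,
      Finset.sum_eq_zero (fun i hi => by
        rw [zero_pow (by have := (Finset.mem_Ico.1 hi).1; omega : i ≠ 0), mul_zero]),
      add_zero] at h
    exact h
  -- descend γ to K
  choose cf hcf hcfeq using hlam
  set d : K := ak * ∏ j : Fin k, (0 - cf j) with hd
  have hdne : d ≠ 0 := mul_ne_zero hak (Finset.prod_ne_zero_iff.2 fun j _ => by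
    simpa using hcf j)
  have hγd : γ * algebraMap K L d = algebraMap K L a0 := by
    rw [heval0, hc, hd, map_mul, map_prod]
    simp only [map_sub, map_zero]
    ring_nf
    congr 1
    exact Finset.prod_congr rfl fun j _ => by rw [hcfeq]
  have ha0 : a0 ≠ 0 := by
    intro h0
    rw [h0, map_zero] at hγd
    exact (mul_ne_zero hγ (by simpa using (algebraMap K L).injective.ne hdne)) hγd
  set s : K := a0 / d with hs
  have hsne : s ≠ 0 := div_ne_zero ha0 hdne
  have hγs : γ = algebraMap K L s := by
    rw [hs, map_div₀, eq_div_iff (by simpa using (algebraMap K L).injective.ne hdne)]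
    exact hγd
  refine ⟨s, hsne, ?_⟩
  rw [hγs, ← map_pow]
  have hsq : s ^ q = s := by rw [← hK]; exact FiniteField.pow_card s
  congr 1
  conv_rhs => rw [pow_succ, hsq]
  rw [sq]
end

section
/- Let q be a prime power, let Λ ⊂ F_q^* be a set of ℓ distinct elements, 1 ≤ k ≤ ℓ-1, and γ ∈ F_{q^2}^* with γ^{q+1} not a nonzero square in F_q. Then every nonzero polynomial F(X) = a_0 + Σ_{i=1}^{k-1} a_i X^i + γ a_k X^k (with a_0, a_k ∈ F_q and a_1,…,a_{k-1} ∈ F_{q^2}) has at most k-1 roots in Λ; consequently its evaluation vector (F(λ))_{λ∈Λ} has Hamming weight at least ℓ - k + 1. -/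
open Polynomial in
open scoped Classical in
/-- If γ^{q+1} is not a nonzero square of F_q, every nonzero twisted polynomial has at
most k-1 roots in Λ, so its evaluation vector has Hamming weight ≥ ℓ - k + 1. -/
theorem stmt7 (q : ℕ) (K L : Type*) [Field K] [Field L] [Fintype K] [Fintype L] [Algebra K L]
    (hK : Fintype.card K = q) (hL : Fintype.card L = q ^ 2)
    (Λ : Finset L) (ℓ k : ℕ) (hΛcard : Λ.card = ℓ)
    (hΛ : ∀ x ∈ Λ, ∃ c : K, c ≠ 0 ∧ x = algebraMap K L c)
    (hk : 1 ≤ k) (hkℓ : k ≤ ℓ - 1)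
    (γ : L) (hγ : γ ≠ 0)
    (hns : ¬ ∃ s : K, s ≠ 0 ∧ algebraMap K L (s ^ 2) = γ ^ (q + 1))
    (a0 ak : K) (mid : ℕ → L)
    (hne : ¬ (a0 = 0 ∧ ak = 0 ∧ ∀ i ∈ Finset.Ico 1 k, mid i = 0)) :
    (Λ.filter (fun x => algebraMap K L a0 + (∑ i ∈ Finset.Ico 1 k, mid i * x ^ i)
        + γ * algebraMap K L ak * x ^ k = 0)).card ≤ k - 1 ∧
    ℓ - k + 1 ≤ (Λ.filter (fun x => algebraMap K L a0 + (∑ i ∈ Finset.Ico 1 k, mid i * x ^ i)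
        + γ * algebraMap K L ak * x ^ k ≠ 0)).card := by
  have hinj : Function.Injective (algebraMap K L) := (algebraMap K L).injective
  set A : L := algebraMap K L a0 with hA
  set B : L := γ * algebraMap K L ak with hB
  set p : L[X] := C A + (∑ i ∈ Finset.Ico 1 k, C (mid i) * X ^ i) + C B * X ^ k with hp
  have heval : ∀ x : L, p.eval x =
      A + (∑ i ∈ Finset.Ico 1 k, mid i * x ^ i) + B * x ^ k := by
    intro x
    simp [hp, eval_finset_sum]
  have hcoeff : ∀ j : ℕ, p.coeff j =
      (if j = 0 then A else 0) + (if j ∈ Finset.Ico 1 k then mid j else 0)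
        + (if j = k then B else 0) := by
    intro j
    simp only [hp, coeff_add, coeff_C, finset_sum_coeff, coeff_C_mul, coeff_X_pow,
      mul_ite, mul_one, mul_zero]
    rw [Finset.sum_ite_eq (Finset.Ico 1 k) j mid]
  have hdegle : p.natDegree ≤ k := by
    rw [natDegree_le_iff_coeff_eq_zero]
    intro m hm
    rw [hcoeff m]
    have h1 : ¬ m = 0 := by omega
    have h2 : m ∉ Finset.Ico 1 k := by simp; omega
    have h3 : ¬ m = k := by omega
    simp [h1, h2, h3]
  -- p ≠ 0
  push_neg at hne
  have hpne : p ≠ 0 := by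
    by_cases h0 : a0 = 0
    · by_cases hk0 : ak = 0
      · obtain ⟨i, hi, hmi⟩ := hne h0 hk0
        intro hc
        apply hmi
        have := hcoeff i
        rw [hc] at this
        have h1 : ¬ i = 0 := by simp at hi; omega
        have h2 : ¬ i = k := by simp at hi; omega
        simpa [h1, h2, hi] using this.symm
      · intro hc
        have := hcoeff k
        rw [hc] at this
        have h2 : k ∉ Finset.Ico 1 k := by simp
        have h1 : ¬ k = 0 := by omega
        rw [coeff_zero] at this
        simp only [h1, h2, if_neg, if_true, if_false, if_pos rfl, zero_add, add_zero,
          not_false_eq_true] at this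
        exact mul_ne_zero hγ (fun h => hk0 (hinj (by simpa using h))) this.symm
    · intro hc
      have := hcoeff 0
      rw [hc] at this
      have h2 : (0:ℕ) ∉ Finset.Ico 1 k := by simp
      have h3 : ¬ (0:ℕ) = k := by omega
      rw [coeff_zero] at this
      simp only [if_pos rfl, h2, if_false, h3, add_zero] at this
      exact h0 (hinj (by simpa [hA] using this.symm))
  -- membership in filter implies root
  have hroot : ∀ x ∈ Λ.filter (fun x => algebraMap K L a0
      + (∑ i ∈ Finset.Ico 1 k, mid i * x ^ i) + γ * algebraMap K L ak * x ^ k = 0),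
      x ∈ p.roots := by
    intro x hx
    rw [Finset.mem_filter] at hx
    rw [mem_roots hpne, IsRoot.def, heval x]
    exact hx.2
  have key : (Λ.filter (fun x => algebraMap K L a0 + (∑ i ∈ Finset.Ico 1 k, mid i * x ^ i)
      + γ * algebraMap K L ak * x ^ k = 0)).card ≤ k - 1 := by
    by_cases hk0 : ak = 0
    · -- degree ≤ k-1 case
      have hB0 : B = 0 := by simp [hB, hk0]
      have hdeg : p.natDegree ≤ k - 1 := by
        rw [natDegree_le_iff_coeff_eq_zero]
        intro m hm
        have hmk : k ≤ m := by omega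
        rw [hcoeff m]
        have h1 : ¬ m = 0 := by omega
        have h2 : m ∉ Finset.Ico 1 k := by simp; omega
        simp [h1, h2, hB0]
      calc _ ≤ p.roots.toFinset.card := by
              apply Finset.card_le_card
              intro x hx
              rw [Multiset.mem_toFinset]; exact hroot x hx
        _ ≤ Multiset.card p.roots := Multiset.toFinset_card_le _
        _ ≤ p.natDegree := p.card_roots'
        _ ≤ k - 1 := hdeg
    · -- leading coeff γ * ak ≠ 0
      have hBne : B ≠ 0 := mul_ne_zero hγ (fun h => hk0 (hinj (by simpa using h)))
      have hck : p.coeff k = B := by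
        rw [hcoeff k]
        have h1 : ¬ k = 0 := by omega
        have h2 : k ∉ Finset.Ico 1 k := by simp
        simp [h1, h2]
      have hdeg : p.natDegree = k :=
        le_antisymm hdegle (le_natDegree_of_ne_zero (by rw [hck]; exact hBne))
      by_contra hcon
      push_neg at hcon
      have hcard : k ≤ (Λ.filter (fun x => algebraMap K L a0
          + (∑ i ∈ Finset.Ico 1 k, mid i * x ^ i)
          + γ * algebraMap K L ak * x ^ k = 0)).card := by omega
      obtain ⟨S, hS, hScard⟩ := Finset.exists_subset_card_eq hcard
      have hSval : S.val ≤ p.roots := by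
        rw [Finset.val_le_iff_val_subset]
        intro x hx
        exact hroot x (hS hx)
      have hrootsS : p.roots = S.val := by
        symm
        apply Multiset.eq_of_le_of_card_le hSval
        calc Multiset.card p.roots ≤ p.natDegree := p.card_roots'
          _ = k := hdeg
          _ = Multiset.card S.val := hScard.symm
      have hroots_card : Multiset.card p.roots = p.natDegree := by
        rw [hrootsS, hdeg]; exact hScard
      have hfact := C_leadingCoeff_mul_prod_multiset_X_sub_C hroots_card
      have hlc : p.leadingCoeff = B := by rw [leadingCoeff, hdeg, hck]
      -- evaluate at 0
      have heval0 : p.eval 0 = A := by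
        rw [heval 0]
        have : (0:L) ^ k = 0 := zero_pow (by omega)
        rw [this, mul_zero, add_zero]
        rw [Finset.sum_eq_zero, add_zero]
        intro i hi
        simp at hi
        rw [zero_pow (by omega), mul_zero]
      have heval0' : p.eval 0 = B * ∏ x ∈ S, (-x) := by
        conv_lhs => rw [← hfact]
        rw [eval_mul, eval_C, hlc, eval_multiset_prod, hrootsS]
        congr 1
        rw [Finset.prod_eq_multiset_prod, Multiset.map_map]
        congr 1
        apply Multiset.map_congr rfl
        intro x _
        simp
      -- choose preimages
      choose! c hc0 hcx using hΛ
      have hSΛ : ∀ x ∈ S, x ∈ Λ := fun x hx => Finset.mem_filter.mp (hS hx) |>.1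
      have hprod : ∏ x ∈ S, (-x) = algebraMap K L (∏ x ∈ S, (-(c x))) := by
        rw [map_prod]
        apply Finset.prod_congr rfl
        intro x hx
        rw [map_neg, ← hcx x (hSΛ x hx)]
      have hdne : (∏ x ∈ S, (-(c x))) ≠ 0 := by
        apply Finset.prod_ne_zero_iff.mpr
        intro x hx
        exact neg_ne_zero.mpr (hc0 x (hSΛ x hx))
      set d : K := ∏ x ∈ S, (-(c x)) with hd
      have hkey : algebraMap K L a0 = γ * algebraMap K L (ak * d) := by
        rw [← hA, ← heval0, heval0', hprod, hB, map_mul]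
        ring
      have hakd : ak * d ≠ 0 := mul_ne_zero hk0 hdne
      set b : K := a0 * (ak * d)⁻¹ with hb
      have hne' : algebraMap K L (ak * d) ≠ 0 := fun h => hakd (hinj (by simpa using h))
      have hγb : γ = algebraMap K L b := by
        rw [hb, map_mul, map_inv₀, hkey, mul_assoc, mul_inv_cancel₀ hne', mul_one]
      have hbne : b ≠ 0 := by
        intro h
        rw [h, map_zero] at hγb
        exact hγ hγb
      apply hns
      refine ⟨b, hbne, ?_⟩
      rw [hγb, ← map_pow]
      congr 1
      have hbq : b ^ q = b := by rw [← hK]; exact FiniteField.pow_card b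
      rw [show b ^ (q + 1) = b ^ q * b from pow_succ b q, hbq]
      ring
  refine ⟨key, ?_⟩
  have hsum := Finset.card_filter_add_card_filter_not
    (s := Λ) (p := fun x => algebraMap K L a0 + (∑ i ∈ Finset.Ico 1 k, mid i * x ^ i)
      + γ * algebraMap K L ak * x ^ k = 0)
  rw [hΛcard] at hsum
  simp only [hA, hB, ne_eq]
  omega
end

section
/- Let K = F_q, L = F_{q^r}, {β_1,…,β_r} a K-basis of L, k ≥ 1, η ∈ L^* and 0 ≤ h ≤ r-1. The Gram matrix G of the twisted linearized Reed–Solomon code L_k^θ(η,h) with respect to the basis {β_t X^j : 1 ≤ j ≤ k-1, 1 ≤ t ≤ r} ∪ {β_t + η θ^h(β_t) X^k : 1 ≤ t ≤ r} and the coefficientwise trace form ⟨F,G⟩ = Tr_{L/K}(Σ_i f_i g_i) is block diagonal, equal to diag(I_{k-1} ⊗ M, B), where M_{t,u} = Tr_{L/K}(β_t β_u) and B_{t,u} = Tr_{L/K}(θ^{-h}(1+η^2) β_t β_u). Consequently det(G) = (det M)^{k-1} · det(B). -/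
/-- The Gram matrix of the TLRS code w.r.t. the natural basis is block diagonal,
diag(I_{k-1} ⊗ M, B), with B_{t,u} = Tr(θ^{-h}(1+η²) β_t β_u); hence
det G = (det M)^{k-1} · det B. -/
theorem stmt12 (q r ℓ k h : ℕ)
    (K L : Type*) [Field K] [Field L] [Fintype K] [Fintype L] [Algebra K L]
    (hK : Fintype.card K = q) (hL : Fintype.card L = q ^ r)
    (θ : L ≃ₐ[K] L) (hθ : ∀ x : L, θ x = x ^ q)
    (b : Module.Basis (Fin r) K L) (η : L) (hη : η ≠ 0)
    (hk1 : 1 ≤ k) (hk2 : k < ℓ * r) (hh : h ≤ r - 1)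
    (v : (Fin (k - 1) × Fin r) ⊕ Fin r → ℕ → L)
    (hv1 : ∀ j t d, v (Sum.inl (j, t)) d = if d = (j : ℕ) + 1 then b t else 0)
    (hv2 : ∀ t d, v (Sum.inr t) d =
      if d = 0 then b t else if d = k then η * (θ ^ h) (b t) else 0)
    (M B : Matrix (Fin r) (Fin r) K)
    (hM : ∀ t u, M t u = Algebra.trace K L (b t * b u))
    (hB : ∀ t u, B t u = Algebra.trace K L ((θ ^ h).symm (1 + η ^ 2) * (b t * b u)))
    (G : Matrix ((Fin (k - 1) × Fin r) ⊕ Fin r) ((Fin (k - 1) × Fin r) ⊕ Fin r) K)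
    (hG : ∀ i i', G i i' = Algebra.trace K L (∑ d ∈ Finset.range (ℓ * r), v i d * v i' d)) :
    G = Matrix.fromBlocks
        (Matrix.kroneckerMap (· * ·) (1 : Matrix (Fin (k - 1)) (Fin (k - 1)) K) M) 0 0 B ∧
    G.det = M.det ^ (k - 1) * B.det := by
  have hmain : G = Matrix.fromBlocks
      (Matrix.kroneckerMap (· * ·) (1 : Matrix (Fin (k - 1)) (Fin (k - 1)) K) M) 0 0 B := by
    ext i i'
    rw [hG]
    match i, i' with
    | Sum.inl (j, t), Sum.inl (j', u) =>
      have hsum : ∑ d ∈ Finset.range (ℓ * r), v (Sum.inl (j, t)) d * v (Sum.inl (j', u)) d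
          = if (j : ℕ) + 1 = (j' : ℕ) + 1 then b t * b u else 0 := by
        rw [Finset.sum_eq_single ((j : ℕ) + 1)]
        · simp [hv1]
        · intro d _ hd
          simp [hv1, hd]
        · intro hmem
          exfalso; apply hmem
          simp only [Finset.mem_range]
          have := j.isLt; omega
      rw [hsum]
      rcases eq_or_ne j j' with rfl | hjj
      · simp [Matrix.fromBlocks, Matrix.kroneckerMap, Matrix.one_apply, hM]
      · have : ((j : ℕ) + 1 = (j' : ℕ) + 1) = False := by
          simp [Fin.val_injective.ne (a₁ := j) hjj]
        simp [this, Matrix.fromBlocks, Matrix.kroneckerMap, Matrix.one_apply, hjj, Fin.val_inj]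
    | Sum.inl (j, t), Sum.inr u =>
      have hsum : ∑ d ∈ Finset.range (ℓ * r), v (Sum.inl (j, t)) d * v (Sum.inr u) d = 0 := by
        apply Finset.sum_eq_zero
        intro d _
        rw [hv1, hv2]
        have hj := j.isLt
        split_ifs <;> first | omega | ring
      rw [hsum]
      simp [Matrix.fromBlocks]
    | Sum.inr t, Sum.inl (j', u) =>
      have hsum : ∑ d ∈ Finset.range (ℓ * r), v (Sum.inr t) d * v (Sum.inl (j', u)) d = 0 := by
        apply Finset.sum_eq_zero
        intro d _
        rw [hv1, hv2]
        have hj := j'.isLt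
        split_ifs <;> first | omega | ring
      rw [hsum]
      simp [Matrix.fromBlocks]
    | Sum.inr t, Sum.inr u =>
      have hk0 : k ≠ 0 := by omega
      have hsum : ∑ d ∈ Finset.range (ℓ * r), v (Sum.inr t) d * v (Sum.inr u) d
          = b t * b u + η ^ 2 * (θ ^ h) (b t * b u) := by
        have hpt : ∀ d, v (Sum.inr t) d * v (Sum.inr u) d
            = (if d = 0 then b t * b u else 0)
              + (if d = k then η ^ 2 * (θ ^ h) (b t * b u) else 0) := by
          intro d
          rw [hv2, hv2]
          rcases eq_or_ne d 0 with rfl | hd0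
          · have : ¬ (0 = k) := by omega
            simp [this]
          · rcases eq_or_ne d k with hdk | hdk
            · subst hdk
              rw [map_mul]
              simp only [if_neg hd0, eq_self_iff_true, if_true]
              ring
            · simp [hd0, hdk]
        simp_rw [hpt]
        rw [Finset.sum_add_distrib, Finset.sum_ite_eq' (Finset.range (ℓ*r)) 0,
          Finset.sum_ite_eq' (Finset.range (ℓ*r)) k]
        have h0 : (0 : ℕ) ∈ Finset.range (ℓ * r) := Finset.mem_range.mpr (by omega)
        have hkm : k ∈ Finset.range (ℓ * r) := by simp [hk2]
        simp [h0, hkm]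
      rw [hsum]
      simp only [Matrix.fromBlocks_apply₂₂, hB]
      rw [map_add]
      have key : Algebra.trace K L (η ^ 2 * (θ ^ h) (b t * b u))
          = Algebra.trace K L ((θ ^ h).symm (η ^ 2) * (b t * b u)) := by
        rw [← Algebra.trace_eq_of_algEquiv (θ ^ h) ((θ ^ h).symm (η ^ 2) * (b t * b u))]
        congr 1
        conv_rhs => rw [map_mul, AlgEquiv.apply_symm_apply]
      rw [key,
        show ((θ ^ h).symm (1 + η ^ 2)) * (b t * b u)
            = b t * b u + (θ ^ h).symm (η ^ 2) * (b t * b u) by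
          rw [map_add, map_one]; ring,
        map_add]
  refine ⟨hmain, ?_⟩
  rw [hmain, Matrix.det_fromBlocks_zero₂₁]
  congr 1
  rw [Matrix.det_kronecker]
  simp
end

section
/- Let K = F_q, L = F_{q^r}, 1 ≤ k ≤ ℓr - 1, 0 ≤ h ≤ r-1, η ∈ L^*. The twisted linearized Reed–Solomon code C = { f_0 + f_1 X + ⋯ + f_{k-1} X^{k-1} + η θ^h(f_0) X^k : f_i ∈ L }, viewed as a K-subspace of the space of polynomials of degree < ℓr equipped with the K-bilinear form ⟨F,G⟩ = Tr_{L/K}(Σ_i f_i g_i), satisfies C ∩ C^⊥ = {0} if and only if 1 + η^2 ≠ 0 in L. -/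
/-- LCD characterization: the TLRS code C satisfies C ∩ C^⊥ = {0} iff 1 + η² ≠ 0. -/
theorem stmt13 (q r ℓ k h : ℕ)
    (K L : Type*) [Field K] [Field L] [Fintype K] [Fintype L] [Algebra K L]
    (hK : Fintype.card K = q) (hL : Fintype.card L = q ^ r)
    (θ : L ≃ₐ[K] L) (hθ : ∀ x : L, θ x = x ^ q)
    (η : L) (hη : η ≠ 0)
    (hk1 : 1 ≤ k) (hk2 : k < ℓ * r) (hh : h ≤ r - 1) :
    let C : Set (Fin (ℓ * r) → L) := {F | ∃ f : ℕ → L, ∀ d : Fin (ℓ * r),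
      F d = if (d : ℕ) < k then f (d : ℕ)
            else if (d : ℕ) = k then η * (θ ^ h) (f 0) else 0}
    let Cperp : Set (Fin (ℓ * r) → L) :=
      {G | ∀ F ∈ C, Algebra.trace K L (∑ d, F d * G d) = 0}
    C ∩ Cperp = {0} ↔ 1 + η ^ 2 ≠ 0 := by
  intro C Cperp
  classical
  haveI : Module.Finite K L := Module.Finite.of_finite
  haveI : Algebra.IsSeparable K L := inferInstance
  set σ : L ≃ₐ[K] L := θ ^ h with hσ
  -- trace invariance under σ
  have htr : ∀ x : L, Algebra.trace K L (σ x) = Algebra.trace K L x :=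
    fun x => Algebra.trace_eq_of_algEquiv σ x
  -- nondegeneracy of the trace form
  have hnd : ∀ x : L, (∀ y : L, Algebra.trace K L (x * y) = 0) → x = 0 := by
    intro x hx
    exact (traceForm_nondegenerate K L).1 x (fun y => hx y)
  -- key constant
  set t : L := 1 + σ.symm (η ^ 2) with ht
  have hts : σ t = 1 + η ^ 2 := by
    rw [ht, map_add, map_one, AlgEquiv.apply_symm_apply]
  have ht0 : t = 0 ↔ 1 + η ^ 2 = 0 :=
    ⟨fun h0 => by rw [← hts, h0, map_zero],
     fun h0 => σ.injective (by rw [hts, h0, map_zero])⟩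
  -- key trace identity
  have hTr : ∀ z : L, Algebra.trace K L (z + η ^ 2 * σ z) = Algebra.trace K L (t * z) := by
    intro z
    have h1 : η ^ 2 * σ z = σ (σ.symm (η ^ 2) * z) := by
      rw [map_mul, AlgEquiv.apply_symm_apply]
    rw [h1, map_add, htr, ← map_add, ht, add_mul, one_mul]
  -- the sum computation
  have hsum : ∀ f g : ℕ → L,
      (∑ d : Fin (ℓ * r),
        (if (d : ℕ) < k then f (d : ℕ) else if (d : ℕ) = k then η * σ (f 0) else 0) *
        (if (d : ℕ) < k then g (d : ℕ) else if (d : ℕ) = k then η * σ (g 0) else 0))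
      = (∑ i ∈ Finset.range k, f i * g i) + (η * σ (f 0)) * (η * σ (g 0)) := by
    intro f g
    rw [Fin.sum_univ_eq_sum_range (fun i =>
      (if i < k then f i else if i = k then η * σ (f 0) else 0) *
      (if i < k then g i else if i = k then η * σ (g 0) else 0))]
    rw [← Finset.sum_subset (Finset.range_subset_range.mpr (show k + 1 ≤ ℓ * r by omega))]
    · rw [Finset.sum_range_succ]
      congr 1
      · apply Finset.sum_congr rfl
        intro i hi
        rw [Finset.mem_range] at hi
        simp [hi]
      · simp
    · intro i _ hi
      rw [Finset.mem_range, not_lt] at hi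
      rw [if_neg (by omega), if_neg (by omega), zero_mul]
  constructor
  · -- C ∩ Cperp = {0} → 1 + η² ≠ 0
    intro hset hcontra
    have htz : t = 0 := ht0.mpr hcontra
    -- the nonzero codeword built from f 0 = 1
    set e : ℕ → L := fun i => if i = 0 then 1 else 0 with he
    set F0 : Fin (ℓ * r) → L := fun d =>
      if (d : ℕ) < k then e (d : ℕ) else if (d : ℕ) = k then η * σ (e 0) else 0 with hF0
    have hF0C : F0 ∈ C := ⟨e, fun d => rfl⟩
    have hF0perp : F0 ∈ Cperp := by
      intro F hF
      obtain ⟨g, hg⟩ := hF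
      have hFeq : (∑ d, F d * F0 d) = (∑ i ∈ Finset.range k, g i * e i) +
          (η * σ (g 0)) * (η * σ (e 0)) := by
        rw [← hsum g e]
        apply Finset.sum_congr rfl
        intro d _
        rw [hg d]
      have he0 : e 0 = (1 : L) := by simp [he]
      have hrange : (∑ i ∈ Finset.range k, g i * e i) = g 0 := by
        rw [Finset.sum_eq_single 0]
        · rw [he0, mul_one]
        · intro i _ hi
          simp [he, hi]
        · intro h0
          exact absurd (Finset.mem_range.mpr (by omega)) h0
      rw [hFeq, hrange, he0, map_one, mul_one]
      have : g 0 + η * σ (g 0) * η = g 0 + η ^ 2 * σ (g 0) := by ring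
      rw [this, hTr (g 0), htz, zero_mul, map_zero]
    have hF0ne : F0 ≠ 0 := by
      intro h0
      have : F0 ⟨0, by omega⟩ = 0 := by rw [h0]; rfl
      rw [hF0] at this
      simp only [Fin.val_mk] at this
      rw [if_pos (by omega)] at this
      simp [he] at this
    exact hF0ne (by
      have : F0 ∈ ({0} : Set (Fin (ℓ * r) → L)) := hset ▸ ⟨hF0C, hF0perp⟩
      exact this)
  · -- 1 + η² ≠ 0 → C ∩ Cperp = {0}
    intro hne
    have htne : t ≠ 0 := fun h0 => hne (ht0.mp h0)
    apply Set.eq_singleton_iff_unique_mem.mpr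
    constructor
    · constructor
      · exact ⟨0, fun d => by simp⟩
      · intro F _
        simp
    · rintro F ⟨⟨f, hf⟩, hperp⟩
      -- pairing with elementary codewords
      have key : ∀ (j : ℕ), j < k → ∀ y : L,
          Algebra.trace K L ((∑ i ∈ Finset.range k, (if i = j then y else 0) * f i) +
            (η * σ (if (0 : ℕ) = j then y else 0)) * (η * σ (f 0))) = 0 := by
        intro j hj y
        set g : ℕ → L := fun i => if i = j then y else 0 with hgdef
        set G : Fin (ℓ * r) → L := fun d =>
          if (d : ℕ) < k then g (d : ℕ) else if (d : ℕ) = k then η * σ (g 0) else 0 with hG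
        have hGperp := hperp G ⟨g, fun d => rfl⟩
        have hFeq : (∑ d, G d * F d) = (∑ i ∈ Finset.range k, g i * f i) +
            (η * σ (g 0)) * (η * σ (f 0)) := by
          rw [← hsum g f]
          apply Finset.sum_congr rfl
          intro d _
          rw [hf d]
        rw [hFeq] at hGperp
        exact hGperp
      -- coefficients for 1 ≤ j < k vanish
      have hfj : ∀ j : ℕ, j < k → j ≠ 0 → f j = 0 := by
        intro j hj hj0
        apply hnd
        intro y
        have hky := key j hj y
        rw [if_neg (Ne.symm hj0), map_zero, mul_zero, zero_mul, add_zero] at hky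
        rw [Finset.sum_eq_single j (fun i _ hi => by rw [if_neg hi, zero_mul])
          (fun h0 => absurd (Finset.mem_range.mpr hj) h0), if_pos rfl, mul_comm] at hky
        exact hky
      -- f 0 vanishes
      have hf0 : f 0 = 0 := by
        have hco : t * f 0 = 0 := by
          apply hnd
          intro y
          have hky := key 0 (by omega) y
          rw [if_pos rfl] at hky
          rw [Finset.sum_eq_single 0 (fun i _ hi => by rw [if_neg hi, zero_mul])
            (fun h0 => absurd (Finset.mem_range.mpr (by omega)) h0), if_pos rfl] at hky
          have harr : y * f 0 + η * σ y * (η * σ (f 0)) =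
              f 0 * y + η ^ 2 * σ (f 0 * y) := by
            rw [map_mul]; ring
          rw [harr, hTr (f 0 * y), ← mul_assoc] at hky
          exact hky
        exact (mul_eq_zero.mp hco).resolve_left htne
      -- conclude F = 0
      funext d
      rw [hf d]
      by_cases h1 : (d : ℕ) < k
      · rw [if_pos h1]
        by_cases h2 : (d : ℕ) = 0
        · rw [h2]; exact hf0
        · exact hfj d h1 h2
      · rw [if_neg h1]
        by_cases h2 : (d : ℕ) = k
        · rw [if_pos h2, hf0, map_zero, mul_zero]; rfl
        · rw [if_neg h2]; rfl
end

section
/- Let q be a prime power, Λ ⊂ F_q^* of size ℓ with 1 ≤ k ≤ ℓ - 1, and γ ∈ F_{q^2}^* with γ^{q+1} not a square in F_q^*. Then the additive twisted Reed–Solomon code C_k(γ) = ev_Λ(D_k(γ)) ⊆ F_{q^2}^ℓ is an F_q-linear code of F_q-dimension 2k with minimum Hamming distance exactly ℓ - k + 1, i.e., it attains the additive Singleton bound d ≤ ℓ - k + 1 with equality. -/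
/-- Evaluation of the twisted space D_k(γ) at the points of Λ. -/
def twistedEval (K L : Type*) [Field K] [Field L] [Algebra K L]
    (γ : L) (k : ℕ) (Λ : Finset L) : K × K × (Fin (k - 1) → L) → (Λ → L) :=
  fun p x => algebraMap K L p.1 + (∑ i : Fin (k - 1), p.2.2 i * (x : L) ^ ((i : ℕ) + 1))
    + γ * algebraMap K L p.2.1 * (x : L) ^ k


open Polynomial Finset

section Aux
variable {K L : Type*} [Field K] [Field L] [Algebra K L]


variable {K L : Type*} [Field K] [Field L] [Algebra K L]

/-- The polynomial attached to a parameter vector of the twisted space. -/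
noncomputable def tpoly (γ : L) (k : ℕ) (p : K × K × (Fin (k - 1) → L)) : L[X] :=
  C (algebraMap K L p.1) + (∑ i : Fin (k - 1), C (p.2.2 i) * X ^ ((i : ℕ) + 1))
    + C (γ * algebraMap K L p.2.1) * X ^ k

lemma tpoly_eval (γ : L) (k : ℕ) (p : K × K × (Fin (k - 1) → L)) (x : L) :
    (tpoly γ k p).eval x
      = algebraMap K L p.1 + (∑ i : Fin (k - 1), p.2.2 i * x ^ ((i : ℕ) + 1))
        + γ * algebraMap K L p.2.1 * x ^ k := by
  simp [tpoly, eval_finset_sum]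

lemma tpoly_natDegree_le (γ : L) (k : ℕ) (p : K × K × (Fin (k - 1) → L)) :
    (tpoly γ k p).natDegree ≤ k := by
  refine (natDegree_add_le _ _).trans (max_le ((natDegree_add_le _ _).trans (max_le ?_ ?_)) ?_)
  · simp
  · refine natDegree_sum_le_of_forall_le _ _ fun i _ => ?_
    refine (natDegree_C_mul_X_pow_le _ _).trans ?_
    have := i.isLt; omega
  · exact natDegree_C_mul_X_pow_le _ _

lemma tpoly_coeff_zero (γ : L) {k : ℕ} (hk : 1 ≤ k) (p : K × K × (Fin (k - 1) → L)) :
    (tpoly γ k p).coeff 0 = algebraMap K L p.1 := by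
  have hk' : k ≠ 0 := by omega
  have hk'' : ¬ ((0:ℕ) = k) := by omega
  simp [tpoly, coeff_X_pow, finset_sum_coeff, hk', hk'']

lemma tpoly_coeff_k (γ : L) {k : ℕ} (hk : 1 ≤ k) (p : K × K × (Fin (k - 1) → L)) :
    (tpoly γ k p).coeff k = γ * algebraMap K L p.2.1 := by
  have hk' : k ≠ 0 := by omega
  rw [tpoly]
  simp only [coeff_add, coeff_C, finset_sum_coeff, coeff_C_mul, coeff_X_pow]
  rw [Finset.sum_eq_zero (fun i _ => by
    have := i.isLt
    have h : ¬ ((k:ℕ) = (i : ℕ) + 1) := by omega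
    simp [h])]
  simp [hk']

lemma tpoly_coeff_succ (γ : L) {k : ℕ} (p : K × K × (Fin (k - 1) → L)) (i : Fin (k - 1)) :
    (tpoly γ k p).coeff ((i : ℕ) + 1) = p.2.2 i := by
  have hik : (i : ℕ) + 1 ≠ k := by have := i.isLt; omega
  rw [tpoly]
  simp only [coeff_add, coeff_C, finset_sum_coeff, coeff_C_mul, coeff_X_pow]
  rw [Finset.sum_eq_single i]
  · simp [hik, Ne.symm hik]
  · intro j _ hj
    have hne : ¬ ((i:ℕ) = (j:ℕ)) := fun h => hj (Fin.ext h.symm)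
    have hne' : ¬ ((i:ℕ) + 1 = (j:ℕ) + 1) := by omega
    simp [hne, hne']
  · simp

lemma tpoly_eq_zero {γ : L} (hγ : γ ≠ 0) {k : ℕ} (hk : 1 ≤ k)
    {p : K × K × (Fin (k - 1) → L)} (h : tpoly γ k p = 0) : p = 0 := by
  have h0 : algebraMap K L p.1 = 0 := by rw [← tpoly_coeff_zero γ hk p, h]; simp
  have hkc : γ * algebraMap K L p.2.1 = 0 := by rw [← tpoly_coeff_k γ hk p, h]; simp
  have h1 : p.1 = 0 := by
    have := (algebraMap K L).injective
    exact this (by simpa using h0)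
  have h2 : p.2.1 = 0 := by
    rcases mul_eq_zero.mp hkc with h' | h'
    · exact absurd h' hγ
    · exact (algebraMap K L).injective (by simpa using h')
  have h3 : p.2.2 = 0 := by
    funext i
    have := tpoly_coeff_succ γ p i
    rw [h] at this
    simpa using this.symm
  obtain ⟨a, b, c⟩ := p
  simp only [Prod.mk_eq_zero] at *
  exact ⟨h1, h2, h3⟩


lemma zeros_card_le {q : ℕ} [Fintype K] (hK : Fintype.card K = q)
    {Λ : Finset L} [DecidableEq L]
    (hΛ : ∀ x ∈ Λ, ∃ c : K, c ≠ 0 ∧ x = algebraMap K L c)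
    {k : ℕ} (hk : 1 ≤ k) {γ : L} (hγ : γ ≠ 0)
    (hns : ¬ ∃ s : K, s ≠ 0 ∧ algebraMap K L (s ^ 2) = γ ^ (q + 1))
    (p : K × K × (Fin (k - 1) → L)) (hp : tpoly γ k p ≠ 0) :
    (Λ.filter fun x => (tpoly γ k p).eval x = 0).card ≤ k - 1 := by
  set tp := tpoly γ k p with htp
  set Z := Λ.filter fun x => tp.eval x = 0 with hZdef
  have hZroots : Z.val ≤ tp.roots := by
    rw [Multiset.le_iff_subset Z.nodup]
    intro x hx
    rw [Finset.mem_val] at hx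
    rw [mem_roots hp]
    exact (Finset.mem_filter.mp hx).2
  by_cases h21 : p.2.1 = 0
  · have hdeg : tp.natDegree ≤ k - 1 := by
      have htp' : tp = C (algebraMap K L p.1)
          + (∑ i : Fin (k - 1), C (p.2.2 i) * X ^ ((i : ℕ) + 1)) := by
        rw [htp, tpoly, h21]; simp
      rw [htp']
      refine (natDegree_add_le _ _).trans (max_le ?_ ?_)
      · simp
      · exact natDegree_sum_le_of_forall_le _ _ fun i _ =>
          (natDegree_C_mul_X_pow_le _ _).trans (by have := i.isLt; omega)
    calc Z.card = Multiset.card Z.val := rfl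
      _ ≤ Multiset.card tp.roots := Multiset.card_le_card hZroots
      _ ≤ tp.natDegree := tp.card_roots'
      _ ≤ k - 1 := hdeg
  · by_contra hcon
    have hZk : k ≤ Z.card := by omega
    have hck : tp.coeff k = γ * algebraMap K L p.2.1 := tpoly_coeff_k γ hk p
    have hckne : tp.coeff k ≠ 0 := by
      rw [hck]
      exact mul_ne_zero hγ (fun h => h21 ((algebraMap K L).injective (by simpa using h)))
    have hdegk : tp.natDegree = k :=
      le_antisymm (tpoly_natDegree_le γ k p) (le_natDegree_of_ne_zero hckne)
    have hcards : Multiset.card tp.roots = k :=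
      le_antisymm (tp.card_roots'.trans hdegk.le)
        (hZk.trans (Multiset.card_le_card hZroots))
    have hroots : tp.roots = Z.val :=
      (Multiset.eq_of_le_of_card_le hZroots (by rw [hcards]; exact hZk)).symm
    have hfac := C_leadingCoeff_mul_prod_multiset_X_sub_C (p := tp) (by rw [hcards, hdegk])
    have hlc : tp.leadingCoeff = γ * algebraMap K L p.2.1 := by
      rw [leadingCoeff, hdegk, hck]
    have he0 : algebraMap K L p.1 = γ * algebraMap K L p.2.1 * ∏ a ∈ Z, (-a) := by
      calc algebraMap K L p.1 = tp.eval 0 := by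
            rw [← tpoly_coeff_zero γ hk p, coeff_zero_eq_eval_zero]
        _ = (C tp.leadingCoeff * (tp.roots.map fun a => X - C a).prod).eval 0 := by rw [hfac]
        _ = tp.leadingCoeff * ((tp.roots.map fun a => X - C a).map (eval 0)).prod := by
            rw [eval_mul, eval_C, eval_multiset_prod]
        _ = γ * algebraMap K L p.2.1 * ∏ a ∈ Z, (-a) := by
            rw [hlc, hroots, Multiset.map_map, Finset.prod_eq_multiset_prod]
            congr 1
            exact congrArg Multiset.prod (Multiset.map_congr rfl fun x _ => by
              simp [Function.comp])
    have hmem : ∀ a ∈ Z, a ∈ (algebraMap K L).fieldRange ∧ a ≠ 0 := by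
      intro a ha
      obtain ⟨c, hc0, hc⟩ := hΛ a (Finset.mem_filter.mp ha).1
      exact ⟨⟨c, hc.symm⟩, by rw [hc]; exact fun h => hc0 ((algebraMap K L).injective (by simpa using h))⟩
    have hprodmem : (∏ a ∈ Z, (-a)) ∈ (algebraMap K L).fieldRange :=
      prod_mem fun a ha => neg_mem (hmem a ha).1
    have hprodne : (∏ a ∈ Z, (-a)) ≠ 0 := by
      rw [Finset.prod_ne_zero_iff]
      exact fun a ha => neg_ne_zero.mpr (hmem a ha).2
    set w : L := algebraMap K L p.2.1 * ∏ a ∈ Z, (-a) with hw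
    have hwne : w ≠ 0 := mul_ne_zero
      (fun h => h21 ((algebraMap K L).injective (by simpa using h))) hprodne
    have hwmem : w ∈ (algebraMap K L).fieldRange :=
      mul_mem ⟨p.2.1, rfl⟩ hprodmem
    have hγw : γ = algebraMap K L p.1 * w⁻¹ := by
      rw [he0, hw]
      rw [mul_assoc γ]
      exact (mul_inv_cancel_right₀ hwne γ).symm
    have hγmem : γ ∈ (algebraMap K L).fieldRange := by
      rw [hγw]
      exact mul_mem ⟨p.1, rfl⟩ (inv_mem hwmem)
    obtain ⟨s, hs⟩ := hγmem
    have hs0 : s ≠ 0 := by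
      intro h; rw [h] at hs; simp at hs; exact hγ hs.symm
    refine hns ⟨s, hs0, ?_⟩
    have hq2 : 2 ≤ q := by rw [← hK]; exact Fintype.one_lt_card
    have hsq : s ^ (q - 1) = 1 := by
      rw [← hK]; exact FiniteField.pow_card_sub_one_eq_one s hs0
    have : s ^ (q + 1) = s ^ 2 := by
      have hqe : q + 1 = 2 + (q - 1) := by omega
      rw [hqe, pow_add, hsq, mul_one]
    rw [← hs, ← map_pow, ← this]

end Aux

lemma sum_split {M : Type*} [AddCommMonoid M] (m : ℕ) (f : ℕ → M) :
    ∑ i ∈ Finset.range (m + 1), f i = f 0 + ∑ i : Fin m, f ((i : ℕ) + 1) := by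
  rw [Finset.sum_range_succ', Fin.sum_univ_eq_sum_range (fun i => f (i + 1)) m, add_comm]

section Ham
variable {L : Type*} [Field L]

lemma ham_count [DecidableEq L] (Λ : Finset L) (f : L → L) :
    hammingNorm (fun x : ↥Λ => f ↑x) = Λ.card - (Λ.filter fun x => f x = 0).card := by
  classical
  have h0 : hammingNorm (fun x : ↥Λ => f ↑x)
      = (Finset.univ.filter fun x : ↥Λ => ¬ (f ↑x = 0)).card := by
    simp [hammingNorm]
  rw [h0, Finset.univ_eq_attach]
  have h1 := Finset.filter_attach (fun x => ¬ (f x = 0)) Λ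
  rw [h1, Finset.card_map, Finset.card_attach]
  have h2 := Finset.card_filter_add_card_filter_not (s := Λ)
    (p := fun x => f x = 0)
  omega

end Ham

/-- If γ^{q+1} is not a square in F_q^*, the additive twisted RS code C_k(γ) has
F_q-dimension 2k and minimum Hamming distance exactly ℓ - k + 1 (additive MDS). -/
theorem stmt17 (q : ℕ) (K L : Type*) [Field K] [Field L] [Fintype K] [Fintype L]
    [DecidableEq L] [Algebra K L]
    (hK : Fintype.card K = q) (hL : Fintype.card L = q ^ 2)
    (hdim : Module.finrank K L = 2)
    (Λ : Finset L) (ℓ k : ℕ) (hΛcard : Λ.card = ℓ)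
    (hΛ : ∀ x ∈ Λ, ∃ c : K, c ≠ 0 ∧ x = algebraMap K L c)
    (hk : 1 ≤ k) (hkℓ : k ≤ ℓ - 1)
    (γ : L) (hγ : γ ≠ 0)
    (hns : ¬ ∃ s : K, s ≠ 0 ∧ algebraMap K L (s ^ 2) = γ ^ (q + 1)) :
    Module.finrank K (Submodule.span K (Set.range (twistedEval K L γ k Λ))) = 2 * k ∧
    (∀ p, twistedEval K L γ k Λ p ≠ 0 → ℓ - k + 1 ≤ hammingNorm (twistedEval K L γ k Λ p)) ∧
    (∃ p, twistedEval K L γ k Λ p ≠ 0 ∧ hammingNorm (twistedEval K L γ k Λ p) = ℓ - k + 1) := by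
  classical
  have hℓk : k + 1 ≤ ℓ := by omega
  have heval : ∀ (p : K × K × (Fin (k - 1) → L)) (x : ↥Λ),
      twistedEval K L γ k Λ p x = (tpoly γ k p).eval ↑x := by
    intro p x; rw [tpoly_eval]; rfl
  refine ⟨?_, ?_, ?_⟩
  · -- dimension
    let T : (K × K × (Fin (k - 1) → L)) →ₗ[K] (↥Λ → L) :=
      { toFun := twistedEval K L γ k Λ
        map_add' := by
          intro a b; funext x
          simp only [twistedEval, Prod.fst_add, Prod.snd_add, Pi.add_apply, map_add,
            add_mul, Finset.sum_add_distrib, mul_add]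
          ring
        map_smul' := by
          intro c a; funext x
          simp only [twistedEval, Prod.smul_fst, Prod.smul_snd, Pi.smul_apply,
            smul_eq_mul, RingHom.id_apply]
          simp only [Algebra.smul_def, map_mul, mul_add, Finset.mul_sum]
          simp only [mul_assoc]
          ring }
    have hinj : Function.Injective T := by
      rw [← LinearMap.ker_eq_bot, LinearMap.ker_eq_bot']
      intro m hm
      have hzero : tpoly γ k m = 0 := by
        refine eq_zero_of_natDegree_lt_card_of_eval_eq_zero' _ Λ (fun x hx => ?_) ?_
        · rw [← heval m ⟨x, hx⟩]
          exact congrFun hm ⟨x, hx⟩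
        · rw [hΛcard]
          exact lt_of_le_of_lt (tpoly_natDegree_le γ k m) (by omega)
      exact tpoly_eq_zero hγ hk hzero
    have hrange : Set.range (twistedEval K L γ k Λ) = ↑(LinearMap.range T) :=
      (LinearMap.coe_range T).symm
    rw [hrange, Submodule.span_eq, LinearMap.finrank_range_of_inj hinj,
      Module.finrank_prod, Module.finrank_prod, Module.finrank_self,
      Module.finrank_pi_fintype]
    simp only [hdim, Finset.sum_const, Finset.card_univ, Fintype.card_fin, smul_eq_mul]
    omega
  · -- distance lower bound
    intro p hp
    have hfun : twistedEval K L γ k Λ p = fun x : ↥Λ => (tpoly γ k p).eval ↑x :=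
      funext (heval p)
    have htpne : tpoly γ k p ≠ 0 := by
      intro h0
      apply hp
      rw [hfun, h0]
      funext x; simp
    have hz := zeros_card_le hK hΛ hk hγ hns p htpne
    have hfil : (Λ.filter fun x => (tpoly γ k p).eval x = 0).card ≤ Λ.card :=
      Finset.card_filter_le _ _
    rw [hfun, ham_count Λ (fun y => (tpoly γ k p).eval y), hΛcard]
    omega
  · -- existence of minimum weight codeword
    obtain ⟨S, hSsub, hScard⟩ := Finset.exists_subset_card_eq (s := Λ) (n := k - 1) (by omega)
    set G : L[X] := ∏ a ∈ S, (X - C a) with hG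
    have hGdeg : G.natDegree = k - 1 := by
      rw [hG, natDegree_prod_of_monic _ _ fun a _ => monic_X_sub_C a]
      simp [natDegree_X_sub_C, hScard]
    have hc0mem : G.coeff 0 ∈ (algebraMap K L).fieldRange := by
      rw [coeff_zero_eq_eval_zero, hG, eval_prod]
      refine prod_mem fun a ha => ?_
      obtain ⟨c, hc0, hc⟩ := hΛ a (hSsub ha)
      simp only [eval_sub, eval_X, eval_C]
      rw [hc]
      exact ⟨-c, by simp⟩
    obtain ⟨c0, hc0⟩ := hc0mem
    set p : K × K × (Fin (k - 1) → L) := (c0, 0, fun i => G.coeff ((i : ℕ) + 1)) with hpdef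
    have hpt : tpoly γ k p = G := by
      rw [tpoly]
    -- simplify last term
      simp only [hpdef, map_zero, mul_zero, C_0, zero_mul, add_zero]
      rw [hc0]
      conv_rhs => rw [G.as_sum_range' k (by omega)]
      have hsplit : ∑ i ∈ Finset.range k, (monomial i) (G.coeff i)
          = (monomial 0) (G.coeff 0) + ∑ i : Fin (k - 1), (monomial ((i : ℕ) + 1)) (G.coeff ((i : ℕ) + 1)) := by
        have h := sum_split (k - 1) (fun i => (monomial i) (G.coeff i))
        rw [show (k - 1) + 1 = k by omega] at h
        exact h
      rw [hsplit]
      congr 1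
      exact Finset.sum_congr rfl fun i _ => C_mul_X_pow_eq_monomial
    have hfun : twistedEval K L γ k Λ p = fun x : ↥Λ => G.eval ↑x := by
      funext x
      rw [heval, hpt]
    have hzs : (Λ.filter fun x => G.eval x = 0) = S := by
      ext x
      simp only [Finset.mem_filter, hG, eval_prod, eval_sub, eval_X, eval_C]
      constructor
      · rintro ⟨hxΛ, hx0⟩
        obtain ⟨a, haS, ha⟩ := Finset.prod_eq_zero_iff.mp hx0
        rw [sub_eq_zero] at ha
        rwa [ha]
      · intro hxS
        exact ⟨hSsub hxS, Finset.prod_eq_zero hxS (by simp)⟩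
    have hdiff : (Λ \ S).Nonempty := by
      rw [← Finset.card_pos, Finset.card_sdiff_of_subset hSsub, hScard, hΛcard]
      omega
    obtain ⟨x, hx⟩ := hdiff
    obtain ⟨hxΛ, hxS⟩ := Finset.mem_sdiff.mp hx
    refine ⟨p, ?_, ?_⟩
    · intro h0
      rw [hfun] at h0
      have hx0 : G.eval x = 0 := congrFun h0 ⟨x, hxΛ⟩
      have : x ∈ (Λ.filter fun y => G.eval y = 0) := Finset.mem_filter.mpr ⟨hxΛ, hx0⟩
      rw [hzs] at this
      exact hxS this
    · rw [hfun, ham_count Λ (fun y => G.eval y), hzs, hScard, hΛcard]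
      omega
end
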